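/- Let U ⊆ EuclideanSpace ℝ (Fin n) be open, let Φ : U → ℍ be twice continuously differentiable with imaginary values, and let A_1, …, A_n : U → ℍ be continuously differentiable with imaginary values (the components of a connection one-form in the standard coordinates). Define the covariant derivative components (d_AΦ)_i x := ∂_i Φ x + (A_i x)*(Φ x) − (Φ x)*(A_i x), where ∂_i is the partial derivative in the i-th coordinate direction. Suppose Φ satisfies the Yang–Mills–Higgs section equation d_A^* d_A Φ = 0, i.e. for every x ∈ U: ∑_{i=1}^n ( ∂_i((d_AΦ)_i) x + (A_i x)*((d_AΦ)_i x) − ((d_AΦ)_i x)*(A_i x) ) = 0. Then for every x ∈ U: ∑_{i=1}^n ∂_i ∂_i (fun y => ‖Φ y‖^2) x = 2 ∑_{i=1}^n ‖(d_AΦ)_i x‖^2; equivalently, d^* d (1 − |Φ|^2) = 2 |d_AΦ|^2. -/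

import Mathlib

open scoped RealInnerProductSpace

private lemma quat_key (P p a b q : Quaternion ℝ) (hP : P.re = 0) (hp : p.re = 0)
    (ha : a.re = 0) (hb : b.re = 0) :
    ⟪q + (a * p + b * P) - (P * b + p * a)
        + (a * (p + a * P - P * a) - (p + a * P - P * a) * a), P⟫
      = ⟪q, P⟫ + ⟪p, p⟫ - ⟪p + a * P - P * a, p + a * P - P * a⟫ := by
  simp only [Quaternion.inner_def, Quaternion.re_mul, Quaternion.re_add, Quaternion.re_sub,
    Quaternion.imI_mul, Quaternion.imJ_mul, Quaternion.imK_mul, Quaternion.imI_add,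
    Quaternion.imJ_add, Quaternion.imK_add, Quaternion.imI_sub, Quaternion.imJ_sub,
    Quaternion.imK_sub, Quaternion.re_star, Quaternion.imI_star, Quaternion.imJ_star,
    Quaternion.imK_star, hP, hp, ha, hb]
  ring

private lemma fderiv_mul_apply' {E : Type*} [NormedAddCommGroup E] [NormedSpace ℝ E]
    {f g : E → Quaternion ℝ} {x : E} (hf : DifferentiableAt ℝ f x)
    (hg : DifferentiableAt ℝ g x) (v : E) :
    fderiv ℝ (fun y => f y * g y) x v
      = f x * fderiv ℝ g x v + fderiv ℝ f x v * g x := by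
  rw [show (fun y => f y * g y) = f * g from rfl, (hf.hasFDerivAt.mul' hg.hasFDerivAt).fderiv]
  simp [ContinuousLinearMap.add_apply, ContinuousLinearMap.smul_apply,
    ContinuousLinearMap.smulRight_apply, smul_eq_mul]

/-- If `Φ` solves the Yang–Mills–Higgs section equation `d_A^* d_A Φ = 0` on an open set
`U ⊆ ℝⁿ`, then `Δ|Φ|² = 2|d_AΦ|²`, i.e. `d^*d(1 − |Φ|²) = 2|d_AΦ|²`, written
componentwise with `∂ᵢ` the partial derivatives along the standard basis vectors. -/
theorem laplacian_norm_sq_of_harmonic_section {n : ℕ}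
    (U : Set (EuclideanSpace ℝ (Fin n))) (hU : IsOpen U)
    (Φ : EuclideanSpace ℝ (Fin n) → Quaternion ℝ)
    (hΦ : ContDiffOn ℝ 2 Φ U) (hΦim : ∀ x ∈ U, (Φ x).re = 0)
    (A : Fin n → EuclideanSpace ℝ (Fin n) → Quaternion ℝ)
    (hA : ∀ i, ContDiffOn ℝ 1 (A i) U)
    (hAim : ∀ i, ∀ x ∈ U, (A i x).re = 0)
    (dAΦ : Fin n → EuclideanSpace ℝ (Fin n) → Quaternion ℝ)
    (hdAΦ : ∀ i x, dAΦ i x =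
      fderiv ℝ Φ x (EuclideanSpace.single i (1 : ℝ))
        + A i x * Φ x - Φ x * A i x)
    (hharm : ∀ x ∈ U,
      ∑ i : Fin n,
        (fderiv ℝ (dAΦ i) x (EuclideanSpace.single i (1 : ℝ))
          + A i x * dAΦ i x - dAΦ i x * A i x) = 0) :
    ∀ x ∈ U,
      ∑ i : Fin n,
        fderiv ℝ (fun y => fderiv ℝ (fun z => ‖Φ z‖ ^ 2) y (EuclideanSpace.single i (1 : ℝ)))
          x (EuclideanSpace.single i (1 : ℝ))
      = 2 * ∑ i : Fin n, ‖dAΦ i x‖ ^ 2 := by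
  intro x hx
  set e : Fin n → EuclideanSpace ℝ (Fin n) := fun i => EuclideanSpace.single i (1 : ℝ) with he
  have hUx : U ∈ nhds x := hU.mem_nhds hx
  -- basic differentiability
  have hΦd : ∀ y ∈ U, DifferentiableAt ℝ Φ y := fun y hy =>
    (hΦ.differentiableOn (by norm_num)).differentiableAt (hU.mem_nhds hy)
  have hAd : ∀ i, ∀ y ∈ U, DifferentiableAt ℝ (A i) y := fun i y hy =>
    ((hA i).differentiableOn one_ne_zero).differentiableAt (hU.mem_nhds hy)
  have hDΦc : ∀ i, ContDiffOn ℝ 1 (fun y => fderiv ℝ Φ y (e i)) U := fun i =>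
    (hΦ.fderiv_of_isOpen hU (by norm_num)).clm_apply contDiffOn_const
  have hDΦd : ∀ i, DifferentiableAt ℝ (fun y => fderiv ℝ Φ y (e i)) x := fun i =>
    ((hDΦc i).differentiableOn one_ne_zero).differentiableAt hUx
  -- imaginary parts of derivatives
  have him : ∀ (f : EuclideanSpace ℝ (Fin n) → Quaternion ℝ), (∀ y ∈ U, (f y).re = 0) →
      ∀ y ∈ U, DifferentiableAt ℝ f y → ∀ v, (fderiv ℝ f y v).re = 0 := by
    intro f hf y hy hfd v
    have h1 : (fun z => ⟪f z, (1 : Quaternion ℝ)⟫) =ᶠ[nhds y] fun _ => (0 : ℝ) := by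
      filter_upwards [hU.mem_nhds hy] with z hz
      simp [Quaternion.inner_def, hf z hz]
    have h2 : fderiv ℝ (fun z => ⟪f z, (1 : Quaternion ℝ)⟫) y v = 0 := by
      rw [h1.fderiv_eq]; simp
    rw [fderiv_inner_apply ℝ hfd (differentiableAt_const _) v] at h2
    simpa [Quaternion.inner_def] using h2
  -- abbreviations at x
  set P := Φ x with hP
  set p : Fin n → Quaternion ℝ := fun i => fderiv ℝ Φ x (e i) with hpdef
  set a : Fin n → Quaternion ℝ := fun i => A i x with hadef
  set b : Fin n → Quaternion ℝ := fun i => fderiv ℝ (A i) x (e i) with hbdef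
  set q : Fin n → Quaternion ℝ := fun i => fderiv ℝ (fun y => fderiv ℝ Φ y (e i)) x (e i)
    with hqdef
  have hPim : P.re = 0 := hΦim x hx
  have hpim : ∀ i, (p i).re = 0 := fun i => him Φ hΦim x hx (hΦd x hx) (e i)
  have haim : ∀ i, (a i).re = 0 := fun i => hAim i x hx
  have hbim : ∀ i, (b i).re = 0 := fun i => him (A i) (hAim i) x hx (hAd i x hx) (e i)
  -- first derivative of the norm square on U
  have hg : ∀ i, ∀ y ∈ U, fderiv ℝ (fun z => ‖Φ z‖ ^ 2) y (e i)
      = 2 * ⟪fderiv ℝ Φ y (e i), Φ y⟫ := by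
    intro i y hy
    have hfun : (fun z => ‖Φ z‖ ^ 2) = fun z => ⟪Φ z, Φ z⟫ := by
      funext z; rw [real_inner_self_eq_norm_sq]
    rw [hfun, fderiv_inner_apply ℝ (hΦd y hy) (hΦd y hy), real_inner_comm, two_mul]
  -- second derivative at x
  have hsecond : ∀ i,
      fderiv ℝ (fun y => fderiv ℝ (fun z => ‖Φ z‖ ^ 2) y (e i)) x (e i)
        = 2 * (⟪q i, P⟫ + ⟪p i, p i⟫) := by
    intro i
    have heq : (fun y => fderiv ℝ (fun z => ‖Φ z‖ ^ 2) y (e i))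
        =ᶠ[nhds x] fun y => 2 * ⟪fderiv ℝ Φ y (e i), Φ y⟫ := by
      filter_upwards [hUx] with y hy using hg i y hy
    rw [heq.fderiv_eq]
    have hd1 : DifferentiableAt ℝ (fun y => ⟪fderiv ℝ Φ y (e i), Φ y⟫) x :=
      (hDΦd i).inner ℝ (hΦd x hx)
    rw [fderiv_const_mul hd1 2]
    simp only [ContinuousLinearMap.smul_apply, smul_eq_mul]
    rw [fderiv_inner_apply ℝ (hDΦd i) (hΦd x hx)]
    rw [real_inner_comm (p i)]
    ring
  -- derivative of dAΦ at x
  have hdA : ∀ i, fderiv ℝ (dAΦ i) x (e i)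
      = q i + (a i * p i + b i * P) - (P * b i + p i * a i) := by
    intro i
    have hfun : dAΦ i = fun y =>
        ((fun y => fderiv ℝ Φ y (e i)) y + A i y * Φ y) - Φ y * A i y := by
      funext y; exact hdAΦ i y
    have hm1 : DifferentiableAt ℝ (fun y => A i y * Φ y) x :=
      (hAd i x hx).mul (hΦd x hx)
    have hm2 : DifferentiableAt ℝ (fun y => Φ y * A i y) x :=
      (hΦd x hx).mul (hAd i x hx)
    rw [hfun, fderiv_fun_sub ((hDΦd i).fun_add hm1) hm2, ContinuousLinearMap.sub_apply,
      fderiv_fun_add (hDΦd i) hm1, ContinuousLinearMap.add_apply,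
      fderiv_mul_apply' (hAd i x hx) (hΦd x hx), fderiv_mul_apply' (hΦd x hx) (hAd i x hx)]
  -- the harmonic equation in terms of the abbreviations
  have hdval : ∀ i, dAΦ i x = p i + a i * P - P * a i := fun i => hdAΦ i x
  have hH : ∑ i : Fin n, (q i + (a i * p i + b i * P) - (P * b i + p i * a i)
      + (a i * (p i + a i * P - P * a i) - (p i + a i * P - P * a i) * a i)) = 0 := by
    have := hharm x hx
    calc ∑ i : Fin n, (q i + (a i * p i + b i * P) - (P * b i + p i * a i)
          + (a i * (p i + a i * P - P * a i) - (p i + a i * P - P * a i) * a i))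
        = ∑ i : Fin n, (fderiv ℝ (dAΦ i) x (e i) + a i * dAΦ i x - dAΦ i x * a i) := by
          refine Finset.sum_congr rfl fun i _ => ?_
          rw [hdA i, hdval i]; abel
      _ = 0 := this
  -- conclude
  have hsum : ∑ i : Fin n, (⟪q i, P⟫ + ⟪p i, p i⟫)
      = ∑ i : Fin n, ⟪p i + a i * P - P * a i, p i + a i * P - P * a i⟫ := by
    have h0 : ∑ i : Fin n, ⟪(q i + (a i * p i + b i * P) - (P * b i + p i * a i)
        + (a i * (p i + a i * P - P * a i) - (p i + a i * P - P * a i) * a i)), P⟫ = 0 := by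
      rw [← sum_inner, hH, inner_zero_left]
    have h1 : ∀ i : Fin n, ⟪(q i + (a i * p i + b i * P) - (P * b i + p i * a i)
        + (a i * (p i + a i * P - P * a i) - (p i + a i * P - P * a i) * a i)), P⟫
        = ⟪q i, P⟫ + ⟪p i, p i⟫ - ⟪p i + a i * P - P * a i, p i + a i * P - P * a i⟫ :=
      fun i => quat_key P (p i) (a i) (b i) (q i) hPim (hpim i) (haim i) (hbim i)
    rw [Finset.sum_congr rfl fun i _ => h1 i, Finset.sum_sub_distrib, sub_eq_zero] at h0
    exact h0
  calc ∑ i : Fin n,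
        fderiv ℝ (fun y => fderiv ℝ (fun z => ‖Φ z‖ ^ 2) y (e i)) x (e i)
      = ∑ i : Fin n, 2 * (⟪q i, P⟫ + ⟪p i, p i⟫) :=
        Finset.sum_congr rfl fun i _ => hsecond i
    _ = 2 * ∑ i : Fin n, (⟪q i, P⟫ + ⟪p i, p i⟫) := by rw [Finset.mul_sum]
    _ = 2 * ∑ i : Fin n, ⟪p i + a i * P - P * a i, p i + a i * P - P * a i⟫ := by rw [hsum]
    _ = 2 * ∑ i : Fin n, ‖dAΦ i x‖ ^ 2 := by
        congr 1
        refine Finset.sum_congr rfl fun i _ => ?_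
        rw [hdval i, real_inner_self_eq_norm_sq]
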